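/- The identity map from ℝ^(ℕ) with the box topology to ℝ^(ℕ) with the finest locally convex vector topology ν in which e_n → 0 is continuous, i.e. ν is weaker than the box topology; moreover ν is strictly weaker. -/

import Mathlib

open Filter Topology

/-- `t` is a locally convex vector topology on `ℝ^(ℕ)` (the finitely supported real
sequences). -/
def IsLCVectorTopology (t : TopologicalSpace (ℕ →₀ ℝ)) : Prop :=
  @IsTopologicalAddGroup (ℕ →₀ ℝ) t _ ∧ @ContinuousSMul ℝ (ℕ →₀ ℝ) _ _ t ∧
    @LocallyConvexSpace ℝ (ℕ →₀ ℝ) _ _ _ _ t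

/-- `ν` is the finest locally convex vector topology on `ℝ^(ℕ)` in which the standard
basis vectors `e_n = single n 1` converge to `0` (this is the topology of the Graev
free locally convex space `L_G(s)`). -/
def IsNuTopology (ν : TopologicalSpace (ℕ →₀ ℝ)) : Prop :=
  IsLCVectorTopology ν ∧
  Tendsto (fun n : ℕ => Finsupp.single n (1 : ℝ)) atTop (@nhds (ℕ →₀ ℝ) ν 0) ∧
  ∀ t : TopologicalSpace (ℕ →₀ ℝ), IsLCVectorTopology t →
    Tendsto (fun n : ℕ => Finsupp.single n (1 : ℝ)) atTop (@nhds (ℕ →₀ ℝ) t 0) → ν ≤ t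

/-- The box topology on `ℝ^(ℕ)`: a set is open iff around each of its points it contains
a box `{y | ∀ n, |y n - x n| < a n}` with all `a n > 0`. -/
def boxTopology : TopologicalSpace (ℕ →₀ ℝ) :=
  TopologicalSpace.generateFrom
    {U : Set (ℕ →₀ ℝ) | ∀ x ∈ U, ∃ a : ℕ → ℝ, (∀ n, 0 < a n) ∧
      {y : ℕ →₀ ℝ | ∀ n, |y n - x n| < a n} ⊆ U}

lemma box_isOpen (x : ℕ →₀ ℝ) (a : ℕ → ℝ) (ha : ∀ n, 0 < a n) :
    IsOpen[boxTopology] {y : ℕ →₀ ℝ | ∀ n, |y n - x n| < a n} := by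
  apply TopologicalSpace.isOpen_generateFrom_of_mem
  intro z hz
  refine ⟨fun n => a n - |z n - x n|, fun n => sub_pos.mpr (hz n), fun y hy n => ?_⟩
  calc |y n - x n| ≤ |y n - z n| + |z n - x n| := abs_sub_le _ _ _
    _ < (a n - |z n - x n|) + |z n - x n| := by
        exact add_lt_add_left (hy n) _
    _ = a n := by ring

lemma geom_half (m : ℕ) :
    ∑ i ∈ Finset.range m, ((2:ℝ)⁻¹) ^ (i + 1) = 1 - (2⁻¹) ^ m := by
  induction m with
  | zero => simp
  | succ n ih => rw [Finset.sum_range_succ, ih]; ring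

lemma sum_single_range (y : ℕ →₀ ℝ) {m : ℕ} (h : y.support ⊆ Finset.range m) :
    ∑ i ∈ Finset.range m, Finsupp.single i (y i) = y := by
  rw [← Finset.sum_subset h (fun i _ hi => by
    rw [Finsupp.notMem_support_iff.mp hi, Finsupp.single_zero])]
  exact Finsupp.sum_single y

lemma box_le (ν : TopologicalSpace (ℕ →₀ ℝ)) (h : IsLCVectorTopology ν) :
    boxTopology ≤ ν := by
  obtain ⟨h1, h2, h3⟩ := h
  rw [le_iff_nhds]
  intro x U hU
  letI := ν
  haveI := h1; haveI := h2; haveI := h3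
  -- get a convex neighborhood C of x inside U
  obtain ⟨C, ⟨hCnhds, hCconv⟩, hCU⟩ := (LocallyConvexSpace.convex_basis (𝕜 := ℝ) x).mem_iff.mp hU
  -- translate to 0
  set D : Set (ℕ →₀ ℝ) := (fun y => x + y) ⁻¹' C with hD
  have hDnhds : D ∈ @nhds (ℕ →₀ ℝ) ν 0 := by
    have : Continuous (fun y : ℕ →₀ ℝ => x + y) := continuous_const.add continuous_id
    have := this.continuousAt (x := (0 : ℕ →₀ ℝ))
    exact this (by simpa using hCnhds)
  have hDconv : Convex ℝ D := by
    intro u hu v hv s t hs ht hst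
    simp only [hD, Set.mem_preimage] at hu hv ⊢
    have : x + (s • u + t • v) = s • (x + u) + t • (x + v) := by
      rw [smul_add, smul_add]
      rw [show s • x + s • u + (t • x + t • v) = (s + t) • x + (s • u + t • v) by
        rw [add_smul]; abel]
      rw [hst, one_smul]
    rw [this]
    exact hCconv hu hv hs ht hst
  have hD0 : (0 : ℕ →₀ ℝ) ∈ D := by
    simp only [hD, Set.mem_preimage, add_zero]
    exact mem_of_mem_nhds hCnhds
  -- for each n, find δ n > 0 with |t| < δ n → t • e_n ∈ D
  have hδ : ∀ n : ℕ, ∃ δ : ℝ, 0 < δ ∧ ∀ t : ℝ, |t| < δ →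
      t • Finsupp.single n (1:ℝ) ∈ D := by
    intro n
    have hc : Continuous (fun t : ℝ => t • Finsupp.single n (1:ℝ)) :=
      continuous_id.smul continuous_const
    have : (fun t : ℝ => t • Finsupp.single n (1:ℝ)) ⁻¹' D ∈ 𝓝 (0:ℝ) := by
      apply hc.continuousAt (x := (0:ℝ))
      simpa using hDnhds
    obtain ⟨δ, hδpos, hball⟩ := Metric.mem_nhds_iff.mp this
    exact ⟨δ, hδpos, fun t ht => hball (by simpa [Real.dist_eq] using ht)⟩
  choose δ hδpos hδmem using hδ
  set a : ℕ → ℝ := fun n => δ n / 2 ^ (n + 1) with ha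
  have hapos : ∀ n, 0 < a n := fun n => div_pos (hδpos n) (by positivity)
  -- the box around x is contained in C ⊆ U
  have hbox_nhds : {y : ℕ →₀ ℝ | ∀ n, |y n - x n| < a n} ∈ @nhds _ boxTopology x :=
    @IsOpen.mem_nhds _ boxTopology _ _ (box_isOpen x a hapos)
      (fun n => by simpa using hapos n)
  refine Filter.mem_of_superset hbox_nhds (Set.Subset.trans ?_ hCU)
  intro z hz
  -- show z ∈ C, i.e. z - x ∈ D
  set y : ℕ →₀ ℝ := z - x with hy
  have hyz : z = x + y := by rw [hy]; abel
  rw [hyz]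
  have hybox : ∀ n, |y n| < a n := by
    intro n
    have := hz n
    simpa [hy, Finsupp.sub_apply] using this
  -- write y as a convex combination of points of D
  obtain ⟨m, hm⟩ := Finset.exists_nat_subset_range y.support
  set w : ℕ → ℝ := fun i => if i < m then (2⁻¹ : ℝ) ^ (i + 1) else (2⁻¹) ^ m with hw
  set p : ℕ → (ℕ →₀ ℝ) := fun i =>
    if i < m then ((2:ℝ) ^ (i + 1) * y i) • Finsupp.single i (1:ℝ) else 0 with hp
  have hwsum : ∑ i ∈ Finset.range (m + 1), w i = 1 := by
    rw [Finset.sum_range_succ]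
    have : ∑ i ∈ Finset.range m, w i = ∑ i ∈ Finset.range m, ((2:ℝ)⁻¹) ^ (i + 1) :=
      Finset.sum_congr rfl fun i hi => by
        simp [hw, Finset.mem_range.mp hi]
    rw [this, geom_half]
    simp [hw]
  have hpmem : ∀ i ∈ Finset.range (m + 1), p i ∈ D := by
    intro i _
    by_cases hi : i < m
    · simp only [hp, if_pos hi]
      apply hδmem
      have h2 : (0:ℝ) < 2 ^ (i + 1) := by positivity
      rw [abs_mul, abs_of_pos h2]
      calc (2:ℝ) ^ (i+1) * |y i| < 2 ^ (i+1) * a i := by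
            exact mul_lt_mul_of_pos_left (hybox i) h2
        _ = δ i := by rw [ha]; field_simp
    · simp only [hp, if_neg hi]
      exact hD0
  have hwpos : ∀ i ∈ Finset.range (m + 1), (0:ℝ) ≤ w i := by
    intro i _
    rw [hw]
    dsimp only
    split <;> positivity
  have hcomb : ∑ i ∈ Finset.range (m + 1), w i • p i = y := by
    rw [Finset.sum_range_succ]
    have hlast : w m • p m = 0 := by simp [hw, hp]
    rw [hlast, add_zero]
    have : ∀ i ∈ Finset.range m, w i • p i = Finsupp.single i (y i) := by
      intro i hi
      have hi' := Finset.mem_range.mp hi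
      simp only [hw, hp, if_pos hi']
      rw [smul_smul, Finsupp.smul_single, smul_eq_mul, mul_one]
      congr 1
      rw [← mul_assoc, ← mul_pow]
      norm_num
    rw [Finset.sum_congr rfl this, sum_single_range y hm]
  have : y ∈ D := by
    rw [← hcomb]
    exact hDconv.sum_mem hwpos hwsum hpmem
  exact this

/-- the identity map from `(ℝ^(ℕ), box)` to `(ℝ^(ℕ), ν)` is continuous,
i.e. `ν` is weaker than the box topology; moreover `ν` is strictly weaker. -/
theorem stmt14 (ν : TopologicalSpace (ℕ →₀ ℝ)) (hν : IsNuTopology ν) :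
    Continuous[boxTopology, ν] (id : (ℕ →₀ ℝ) → (ℕ →₀ ℝ)) ∧ ν ≠ boxTopology := by
  have hle : boxTopology ≤ ν := box_le ν hν.1
  constructor
  · exact continuous_id_iff_le.mpr hle
  · intro heq
    have htend := hν.2.1
    rw [heq] at htend
    have hB : IsOpen[boxTopology] {y : ℕ →₀ ℝ | ∀ n, |y n - (0:ℕ →₀ ℝ) n| < 1} :=
      box_isOpen 0 (fun _ => 1) (fun _ => one_pos)
    have hBnhds : {y : ℕ →₀ ℝ | ∀ n, |y n - (0:ℕ →₀ ℝ) n| < 1}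
        ∈ @nhds (ℕ →₀ ℝ) boxTopology 0 :=
      @IsOpen.mem_nhds _ boxTopology _ _ hB (fun n => by simp)
    have := htend.eventually_mem hBnhds
    obtain ⟨n, hn⟩ := this.exists
    have := hn n
    simp [Finsupp.single_apply] at this
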